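/- Let K ≥ 0 be an integer and v : {0,…,K+1} → ℕ with v(k) ≥ 1 for all k. Define for each k ∈ {0,…,K} the reals α_k := v(k)·v(k+1)/(v(k)+v(k+1)−1) and β_k := min(v(k), v(k+1)), and set α := (Σ_{k=0}^{K} α_k^{−1})^{−1}, β := (Σ_{k=0}^{K} β_k^{−1})^{−1}. Then α = β if and only if for every k ∈ {0,…,K}, v(k) = 1 or v(k+1) = 1. -/

import Mathlib

lemma term_le (a b : ℕ) (ha : 1 ≤ a) (hb : 1 ≤ b) :
    ((min a b : ℕ) : ℝ)⁻¹ ≤ (((a : ℝ) * (b : ℝ)) / ((a : ℝ) + (b : ℝ) - 1))⁻¹ := by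
  have hA : (1:ℝ) ≤ a := by exact_mod_cast ha
  have hB : (1:ℝ) ≤ b := by exact_mod_cast hb
  have hden : (0:ℝ) < (a:ℝ) + b - 1 := by linarith
  have hab : (0:ℝ) < (a:ℝ) * b := by nlinarith
  rw [Nat.cast_min, inv_div]
  rcases le_total (a:ℝ) (b:ℝ) with h | h
  · rw [min_eq_left h, inv_eq_one_div, div_le_div_iff₀ (by linarith) hab]
    nlinarith
  · rw [min_eq_right h, inv_eq_one_div, div_le_div_iff₀ (by linarith) hab]
    nlinarith

lemma term_eq (a b : ℕ) (ha : 1 ≤ a) (hb : 1 ≤ b) :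
    (((a : ℝ) * (b : ℝ)) / ((a : ℝ) + (b : ℝ) - 1))⁻¹ = ((min a b : ℕ) : ℝ)⁻¹ ↔
      a = 1 ∨ b = 1 := by
  have hA : (1:ℝ) ≤ a := by exact_mod_cast ha
  have hB : (1:ℝ) ≤ b := by exact_mod_cast hb
  have hden : (0:ℝ) < (a:ℝ) + b - 1 := by linarith
  have hab : (0:ℝ) < (a:ℝ) * b := by nlinarith
  rw [Nat.cast_min, inv_div]
  constructor
  · intro h
    rcases le_total (a:ℝ) (b:ℝ) with hle | hle
    · rw [min_eq_left hle, inv_eq_one_div, div_eq_div_iff hab.ne' (by linarith)] at h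
      left
      have : (a:ℝ) = 1 := by nlinarith
      exact_mod_cast this
    · rw [min_eq_right hle, inv_eq_one_div, div_eq_div_iff hab.ne' (by linarith)] at h
      right
      have : (b:ℝ) = 1 := by nlinarith
      exact_mod_cast this
  · rintro (h | h)
    · have h1 : (a:ℝ) = 1 := by exact_mod_cast h
      rw [h1, min_eq_left (by linarith)]
      have hb0 : (b:ℝ) ≠ 0 := by linarith
      field_simp
      ring
    · have h1 : (b:ℝ) = 1 := by exact_mod_cast h
      rw [h1, min_eq_right (by linarith)]
      have ha0 : (a:ℝ) ≠ 0 := by linarith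
      field_simp
      ring

/-- Optimality condition (finite-node version): `α = β` iff for every hop `k`,
`v k = 1` or `v (k+1) = 1`. -/
theorem optimality_condition (K : ℕ) (v : ℕ → ℕ) (hv : ∀ k ≤ K + 1, 1 ≤ v k)
    (α β : ℝ)
    (hα : α = (∑ k ∈ Finset.range (K + 1),
      (((v k : ℝ) * (v (k + 1) : ℝ)) / ((v k : ℝ) + (v (k + 1) : ℝ) - 1))⁻¹)⁻¹)
    (hβ : β = (∑ k ∈ Finset.range (K + 1), ((min (v k) (v (k + 1)) : ℕ) : ℝ)⁻¹)⁻¹) :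
    α = β ↔ ∀ k ≤ K, v k = 1 ∨ v (k + 1) = 1 := by
  subst hα hβ
  have hvk : ∀ k ∈ Finset.range (K + 1), 1 ≤ v k ∧ 1 ≤ v (k + 1) := by
    intro k hk
    rw [Finset.mem_range, Nat.lt_succ_iff] at hk
    exact ⟨hv k (by omega), hv (k + 1) (by omega)⟩
  have hle : ∀ k ∈ Finset.range (K + 1),
      ((min (v k) (v (k + 1)) : ℕ) : ℝ)⁻¹ ≤
        (((v k : ℝ) * (v (k + 1) : ℝ)) / ((v k : ℝ) + (v (k + 1) : ℝ) - 1))⁻¹ := fun k hk =>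
    term_le _ _ (hvk k hk).1 (hvk k hk).2
  rw [inv_inj, eq_comm, Finset.sum_eq_sum_iff_of_le hle]
  constructor
  · intro h k hk
    have hk' : k ∈ Finset.range (K + 1) := by simp [Nat.lt_succ_iff, hk]
    exact (term_eq _ _ (hvk k hk').1 (hvk k hk').2).mp (h k hk').symm
  · intro h k hk
    rw [Finset.mem_range, Nat.lt_succ_iff] at hk
    exact ((term_eq _ _ (hv k (by omega)) (hv (k+1) (by omega))).mpr (h k hk)).symm
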